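/- arXiv:2508.08369 — 2 statements merged into one kernel-verified Lean document; each statement's English description precedes it below -/
import Mathlib

section
/- Let m ≥ 1 and s ∈ ℝ^m. The function p ↦ -∑_{j=1}^m p_j s_j + (1/2)∑_{j=1}^m p_j² has a unique minimizer p* over the probability simplex Δ^{m-1}, and there exists a threshold t ∈ ℝ such that p*_j = max(0, s_j - t) for every j and ∑_{j=1}^m max(0, s_j - t) = 1. (This is the Sparsemax transformation.) -/
open Real Finset

/-- The L2-regularized objective `-∑ⱼ pⱼ sⱼ + (1/2)∑ⱼ pⱼ²` has a
unique minimizer over the probability simplex, and this minimizer has the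
Sparsemax form `p*ⱼ = max 0 (sⱼ - t)` for a threshold `t` with
`∑ⱼ max 0 (sⱼ - t) = 1`. -/
theorem sparsemax_from_l2_regularization
    (m : ℕ) (hm : 1 ≤ m) (s : Fin m → ℝ) :
    let Δ : Set (Fin m → ℝ) := {p | (∀ j, 0 ≤ p j) ∧ ∑ j, p j = 1}
    let J : (Fin m → ℝ) → ℝ := fun p =>
      -∑ j, p j * s j + (1/2) * ∑ j, (p j) ^ 2
    (∃! p, p ∈ Δ ∧ IsMinOn J Δ p) ∧
      ∀ p, (p ∈ Δ ∧ IsMinOn J Δ p) →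
        ∃ t : ℝ, (∀ j, p j = max 0 (s j - t)) ∧ ∑ j, max 0 (s j - t) = 1 := by
  intro Δ J
  have hΔ : ∀ p : Fin m → ℝ, p ∈ Δ ↔ (∀ j, 0 ≤ p j) ∧ ∑ j, p j = 1 := fun p => Iff.rfl
  have hJ : ∀ p : Fin m → ℝ,
      J p = -∑ j, p j * s j + (1/2) * ∑ j, (p j) ^ 2 := fun p => rfl
  clear_value Δ J
  have hne : Nonempty (Fin m) := ⟨⟨0, hm⟩⟩
  have hune : (Finset.univ : Finset (Fin m)).Nonempty := Finset.univ_nonempty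
  -- the threshold function
  set F : ℝ → ℝ := fun t => ∑ j, max 0 (s j - t) with hF
  have hFcont : Continuous F :=
    continuous_finset_sum _ fun j _ =>
      continuous_const.max (continuous_const.sub continuous_id)
  set j0 : Fin m := ⟨0, hm⟩
  set a : ℝ := s j0 - 1 with ha
  set b : ℝ := Finset.univ.sup' hune s with hb
  have hab : a ≤ b := by
    have := Finset.le_sup' s (Finset.mem_univ j0)
    simp only [ha]; linarith
  have hFb : F b = 0 := by
    refine Finset.sum_eq_zero fun j _ => ?_
    have := Finset.le_sup' s (Finset.mem_univ j)
    exact max_eq_left (by linarith)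
  have hFa : 1 ≤ F a := by
    have h1 : max 0 (s j0 - a) = 1 := by simp [ha]
    calc (1:ℝ) = max 0 (s j0 - a) := h1.symm
    _ ≤ F a := Finset.single_le_sum (f := fun j => max 0 (s j - a))
          (fun j _ => le_max_left _ _) (Finset.mem_univ j0)
  have hIVT : (1:ℝ) ∈ F '' Set.Icc a b := by
    apply intermediate_value_Icc' hab hFcont.continuousOn
    rw [hFb]; exact ⟨zero_le_one, hFa⟩
  obtain ⟨t, -, ht⟩ := hIVT
  have ht' : ∑ j, max 0 (s j - t) = 1 := ht
  -- the candidate minimizer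
  set q : Fin m → ℝ := fun j => max 0 (s j - t) with hq
  have hqj : ∀ j, q j = max 0 (s j - t) := fun j => rfl
  have hqΔ : q ∈ Δ := (hΔ q).mpr ⟨fun j => le_max_left _ _, ht'⟩
  -- expansion of J
  have Jeq : ∀ p : Fin m → ℝ, J p = ∑ j, (-(p j * s j) + (1/2) * (p j) ^ 2) := by
    intro p
    rw [hJ]
    simp [Finset.sum_add_distrib, Finset.mul_sum, Finset.sum_neg_distrib]
  have key : ∀ p ∈ Δ, J q + (1/2) * ∑ j, (p j - q j) ^ 2 ≤ J p := by
    intro p hp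
    obtain ⟨hp1, hp2⟩ := (hΔ p).mp hp
    have hdiff : J p - J q =
        ∑ j, ((p j - q j) * (q j - s j) + (1/2) * (p j - q j) ^ 2) := by
      rw [Jeq p, Jeq q, ← Finset.sum_sub_distrib]
      exact Finset.sum_congr rfl fun j _ => by ring
    have hqs : ∀ j, q j - s j = max 0 (t - s j) - t := by
      intro j
      rw [hqj j]
      rcases le_total (s j) t with h | h
      · rw [max_eq_left (by linarith), max_eq_right (by linarith)]; ring
      · rw [max_eq_right (by linarith), max_eq_left (by linarith)]; ring
    have hcross : 0 ≤ ∑ j, (p j - q j) * (q j - s j) := by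
      have heq : ∑ j, (p j - q j) * (q j - s j) =
          ∑ j, (p j - q j) * max 0 (t - s j) := by
        have h5 : ∀ j, (p j - q j) * (q j - s j) =
            (p j - q j) * max 0 (t - s j) - t * (p j - q j) := by
          intro j; rw [hqs j]; ring
        rw [Finset.sum_congr rfl fun j _ => h5 j, Finset.sum_sub_distrib]
        have h6 : ∑ j, t * (p j - q j) = t * (∑ j, p j - ∑ j, q j) := by
          rw [← Finset.mul_sum, Finset.sum_sub_distrib]
        rw [h6, hp2, ht']; ring
      rw [heq]
      refine Finset.sum_nonneg fun j _ => ?_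
      rcases le_total t (s j) with h | h
      · rw [max_eq_left (by linarith)]; simp
      · have hq0 : q j = 0 := by rw [hqj j]; exact max_eq_left (by linarith)
        rw [hq0, sub_zero]
        exact mul_nonneg (hp1 j) (le_max_left _ _)
    have hsplit : ∑ j, ((p j - q j) * (q j - s j) + (1/2) * (p j - q j) ^ 2) =
        (∑ j, (p j - q j) * (q j - s j)) + (1/2) * ∑ j, (p j - q j) ^ 2 := by
      rw [Finset.sum_add_distrib, ← Finset.mul_sum]
    rw [hsplit] at hdiff
    linarith
  have hsqnn : ∀ p : Fin m → ℝ, 0 ≤ ∑ j, (p j - q j) ^ 2 :=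
    fun p => Finset.sum_nonneg fun j _ => sq_nonneg _
  have hqmin : IsMinOn J Δ q := by
    intro p hp
    have h1 := key p hp
    have h2 := hsqnn p
    show J q ≤ J p
    linarith
  have huniq : ∀ p, p ∈ Δ ∧ IsMinOn J Δ p → p = q := by
    intro p ⟨hpΔ, hpmin⟩
    have h1 : J p ≤ J q := hpmin hqΔ
    have h2 := key p hpΔ
    have h3 : ∑ j, (p j - q j) ^ 2 ≤ 0 := by linarith
    have h4 : ∑ j, (p j - q j) ^ 2 = 0 := le_antisymm h3 (hsqnn p)
    funext j
    have h5 := (Finset.sum_eq_zero_iff_of_nonneg (fun j _ => sq_nonneg (p j - q j))).mp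
      h4 j (Finset.mem_univ j)
    have h6 := pow_eq_zero_iff (n := 2) (by norm_num) |>.mp h5
    have : p j = q j := by linarith
    rw [this, hqj j]
  constructor
  · exact ⟨q, ⟨hqΔ, hqmin⟩, fun p hp => huniq p hp⟩
  · intro p hp
    exact ⟨t, fun j => by rw [huniq p hp, hqj j], ht'⟩
end

section
/- Let m ≥ 1, α > 1, and s ∈ ℝ^m. Define the regularizer Ω(p) = (1/(α(α-1))) ∑_{j=1}^m (p_j^α - p_j). The function p ↦ -∑_{j=1}^m p_j s_j + Ω(p) has a unique minimizer p* over the probability simplex Δ^{m-1}, and there exists a threshold t ∈ ℝ such that for every j, p*_j = (max(0, (α-1)(s_j - t)))^{1/(α-1)}. (This is the α-entmax transformation.) -/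
open Real Finset

lemma hasDerivAt_psi {α : ℝ} (hα : 1 < α) (a x : ℝ) :
    HasDerivAt (fun y : ℝ => y ^ α / α - a * y) (x ^ (α - 1) - a) x := by
  have h1 : HasDerivAt (fun y : ℝ => y ^ α) (α * x ^ (α - 1)) x :=
    Real.hasDerivAt_rpow_const (Or.inr hα.le)
  have h2 := (h1.div_const α).sub ((hasDerivAt_id x).const_mul a)
  convert h2 using 1
  have hα0 : α ≠ 0 := by positivity
  · rfl
  · rfl
  · rfl
  · rw [mul_div_cancel_left₀ _ (by linarith : (0:ℝ) < α).ne', mul_one]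

lemma psi_strict {α : ℝ} (hα : 1 < α) (a x : ℝ) (hx : 0 ≤ x)
    (hne : x ≠ (max 0 a) ^ (1 / (α - 1))) :
    ((max 0 a) ^ (1 / (α - 1))) ^ α / α - a * (max 0 a) ^ (1 / (α - 1)) <
      x ^ α / α - a * x := by
  have hβ : (0:ℝ) < α - 1 := by linarith
  have hα0 : (0:ℝ) < α := by linarith
  set ψ : ℝ → ℝ := fun y => y ^ α / α - a * y with hψdef
  rcases le_or_gt a 0 with ha | ha
  · have hmax : max 0 a = 0 := max_eq_left ha
    have hq : (max 0 a) ^ (1 / (α - 1)) = 0 := by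
      rw [hmax, Real.zero_rpow (by positivity)]
    rw [hq]
    have hx0 : 0 < x := lt_of_le_of_ne hx (by rw [hq] at hne; exact Ne.symm hne)
    have h1 : 0 < x ^ α := Real.rpow_pos_of_pos hx0 α
    have h2 : a * x ≤ 0 := mul_nonpos_of_nonpos_of_nonneg ha hx0.le
    have h3 : (0:ℝ) ^ α = 0 := Real.zero_rpow (ne_of_gt hα0)
    rw [h3]
    have h4 : 0 < x ^ α / α := by positivity
    have h5 : (0:ℝ) / α - a * 0 = 0 := by ring
    nlinarith
  · have hmax : max 0 a = a := max_eq_right ha.le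
    rw [hmax] at hne ⊢
    set q : ℝ := a ^ (1 / (α - 1)) with hqdef
    have hq0 : 0 < q := Real.rpow_pos_of_pos ha _
    have hqβ : q ^ (α - 1) = a := by
      rw [hqdef, one_div, Real.rpow_inv_rpow ha.le (by positivity)]
    have hcont : Continuous ψ :=
      continuous_iff_continuousAt.mpr fun y => (hasDerivAt_psi hα a y).continuousAt
    have hderiv : ∀ y, deriv ψ y = y ^ (α - 1) - a := fun y => (hasDerivAt_psi hα a y).deriv
    have anti : StrictAntiOn ψ (Set.Icc 0 q) := by
      apply strictAntiOn_of_deriv_neg (convex_Icc 0 q) hcont.continuousOn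
      intro y hy
      rw [interior_Icc] at hy
      rw [hderiv]
      have : y ^ (α - 1) < q ^ (α - 1) := Real.rpow_lt_rpow hy.1.le hy.2 hβ
      rw [hqβ] at this; linarith
    have mono : StrictMonoOn ψ (Set.Ici q) := by
      apply strictMonoOn_of_deriv_pos (convex_Ici q) hcont.continuousOn
      intro y hy
      rw [interior_Ici] at hy
      rw [hderiv]
      have : q ^ (α - 1) < y ^ (α - 1) := Real.rpow_lt_rpow hq0.le hy hβ
      rw [hqβ] at this; linarith
    rcases lt_or_gt_of_ne hne with h | h
    · exact anti ⟨hx, h.le⟩ ⟨hq0.le, le_rfl⟩ h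
    · exact mono (Set.mem_Ici.mpr le_rfl) (Set.mem_Ici.mpr h.le) h

lemma psi_le {α : ℝ} (hα : 1 < α) (a x : ℝ) (hx : 0 ≤ x) :
    ((max 0 a) ^ (1 / (α - 1))) ^ α / α - a * (max 0 a) ^ (1 / (α - 1)) ≤
      x ^ α / α - a * x := by
  rcases eq_or_ne x ((max 0 a) ^ (1 / (α - 1))) with h | h
  · rw [h]
  · exact (psi_strict hα a x hx h).le

/-- The Tsallis-entropy-regularized objective
`-∑ⱼ pⱼ sⱼ + (1/(α(α-1))) ∑ⱼ (pⱼ^α - pⱼ)` has a unique minimizer over the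
probability simplex, of the α-entmax form
`p*ⱼ = (max 0 ((α-1)(sⱼ - t)))^(1/(α-1))` for some threshold `t`. -/
theorem alpha_entmax_from_tsallis_entropy
    (m : ℕ) (hm : 1 ≤ m) (α : ℝ) (hα : 1 < α) (s : Fin m → ℝ) :
    let Δ : Set (Fin m → ℝ) := {p | (∀ j, 0 ≤ p j) ∧ ∑ j, p j = 1}
    let Ω : (Fin m → ℝ) → ℝ := fun p =>
      (1 / (α * (α - 1))) * ∑ j, ((p j) ^ α - p j)
    let J : (Fin m → ℝ) → ℝ := fun p => -∑ j, p j * s j + Ω p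
    (∃! p, p ∈ Δ ∧ IsMinOn J Δ p) ∧
      ∀ p, (p ∈ Δ ∧ IsMinOn J Δ p) →
        ∃ t : ℝ, ∀ j, p j = (max 0 ((α - 1) * (s j - t))) ^ (1 / (α - 1)) := by
  intro Δ Ω J
  have hβ : (0:ℝ) < α - 1 := by linarith
  have hα0 : (0:ℝ) < α := by linarith
  haveI : Nonempty (Fin m) := ⟨⟨0, hm⟩⟩
  -- Threshold existence via IVT
  set f : ℝ → ℝ := fun t => ∑ j, (max 0 ((α - 1) * (s j - t))) ^ (1 / (α - 1))
    with hfdef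
  have hf : Continuous f := by
    apply continuous_finset_sum
    intro j _
    have h1 : Continuous fun t : ℝ => max 0 ((α - 1) * (s j - t)) :=
      continuous_const.max (continuous_const.mul (continuous_const.sub continuous_id))
    exact h1.rpow_const fun t => Or.inr (by positivity)
  obtain ⟨j0, -, hj0⟩ :=
    Finset.exists_max_image Finset.univ s Finset.univ_nonempty
  simp only [Finset.mem_univ, true_implies] at hj0
  -- f at t = s j0 is 0, at t = s j0 - 1/(α-1) is ≥ 1
  have hf1 : f (s j0) = 0 := by
    rw [hfdef]
    apply Finset.sum_eq_zero
    intro j _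
    have h1 : (α - 1) * (s j - s j0) ≤ 0 :=
      mul_nonpos_of_nonneg_of_nonpos hβ.le (by linarith [hj0 j])
    rw [max_eq_left h1, Real.zero_rpow (by positivity)]
  have hf0 : 1 ≤ f (s j0 - 1 / (α - 1)) := by
    have hterm : (max 0 ((α - 1) * (s j0 - (s j0 - 1 / (α - 1))))) ^ (1 / (α - 1))
        = 1 := by
      have h2 : (α - 1) * (s j0 - (s j0 - 1 / (α - 1))) = 1 := by
        field_simp
        ring
      rw [h2, max_eq_right zero_le_one, Real.one_rpow]
    have hsum := Finset.single_le_sum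
      (f := fun j => (max 0 ((α - 1) * (s j - (s j0 - 1 / (α - 1))))) ^ (1 / (α - 1)))
      (fun j _ => Real.rpow_nonneg (le_max_left _ _) _) (Finset.mem_univ j0)
    rw [hterm] at hsum
    exact hsum
  have ht01 : s j0 - 1 / (α - 1) ≤ s j0 := by
    have h3 : 0 < 1 / (α - 1) := by positivity
    linarith
  obtain ⟨t, -, htf⟩ : ∃ t ∈ Set.Icc (s j0 - 1 / (α - 1)) (s j0), f t = 1 := by
    have h4 := intermediate_value_Icc' ht01 hf.continuousOn
    have hmem : (1:ℝ) ∈ Set.Icc (f (s j0)) (f (s j0 - 1 / (α - 1))) := by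
      rw [hf1]; exact ⟨zero_le_one, hf0⟩
    obtain ⟨t, ht, htf⟩ := h4 hmem
    exact ⟨t, ht, htf⟩
  -- the candidate minimizer
  set q : Fin m → ℝ := fun j => (max 0 ((α - 1) * (s j - t))) ^ (1 / (α - 1))
    with hqdef
  have hq0 : ∀ j, 0 ≤ q j := fun j => Real.rpow_nonneg (le_max_left _ _) _
  have hqsum : ∑ j, q j = 1 := htf
  have hqΔ : q ∈ Δ := ⟨hq0, hqsum⟩
  -- expansion of J
  have expand : ∀ p : Fin m → ℝ, ∑ j, p j = 1 →
      J p = (1 / (α - 1)) *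
          (∑ j, ((p j) ^ α / α - ((α - 1) * (s j - t)) * p j))
        - t - 1 / (α * (α - 1)) := by
    intro p hp
    simp only [J, Ω]
    rw [Finset.sum_sub_distrib, Finset.sum_sub_distrib]
    have e1 : ∑ j, ((α - 1) * (s j - t)) * p j
        = (α - 1) * ∑ j, p j * s j - (α - 1) * t := by
      have h5 : ∀ j ∈ Finset.univ, ((α - 1) * (s j - t)) * p j
          = (α - 1) * (p j * s j) - ((α - 1) * t) * p j := fun j _ => by ring
      rw [Finset.sum_congr rfl h5, Finset.sum_sub_distrib,
        ← Finset.mul_sum, ← Finset.mul_sum, hp, mul_one]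
    rw [e1]
    have e2 : ∑ j, (p j) ^ α / α = (∑ j, (p j) ^ α) / α := by
      rw [Finset.sum_div]
    rw [e2, hp]
    field_simp
    ring
  -- termwise comparison
  have hterm_le : ∀ (p : Fin m → ℝ), (∀ j, 0 ≤ p j) → ∀ j : Fin m,
      (q j) ^ α / α - ((α - 1) * (s j - t)) * q j ≤
        (p j) ^ α / α - ((α - 1) * (s j - t)) * p j := by
    intro p hp j
    exact psi_le hα ((α - 1) * (s j - t)) (p j) (hp j)
  have hJle : ∀ p ∈ Δ, J q ≤ J p := by
    intro p hpΔ
    rw [expand p hpΔ.2, expand q hqsum]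
    have h6 := Finset.sum_le_sum (s := Finset.univ) fun j _ => hterm_le p hpΔ.1 j
    have h7 : (0:ℝ) ≤ 1 / (α - 1) := by positivity
    nlinarith [mul_le_mul_of_nonneg_left h6 h7]
  have hJlt : ∀ p ∈ Δ, p ≠ q → J q < J p := by
    intro p hpΔ hne
    obtain ⟨j1, hj1⟩ := Function.ne_iff.mp hne
    rw [expand p hpΔ.2, expand q hqsum]
    have h8 : ∑ j, ((q j) ^ α / α - ((α - 1) * (s j - t)) * q j) <
        ∑ j, ((p j) ^ α / α - ((α - 1) * (s j - t)) * p j) := by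
      apply Finset.sum_lt_sum (fun j _ => hterm_le p hpΔ.1 j)
      refine ⟨j1, Finset.mem_univ j1, ?_⟩
      exact psi_strict hα ((α - 1) * (s j1 - t)) (p j1) (hpΔ.1 j1) hj1
    have h9 : (0:ℝ) < 1 / (α - 1) := by positivity
    nlinarith [mul_lt_mul_of_pos_left h8 h9]
  have hqmin : IsMinOn J Δ q := isMinOn_iff.mpr fun p hp => hJle p hp
  have huniq : ∀ y, (y ∈ Δ ∧ IsMinOn J Δ y) → y = q := by
    intro y ⟨hyΔ, hymin⟩
    by_contra hne
    have h1 := hJlt y hyΔ hne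
    have h2 := isMinOn_iff.mp hymin q hqΔ
    linarith
  refine ⟨⟨q, ⟨hqΔ, hqmin⟩, huniq⟩, ?_⟩
  intro p hp
  exact ⟨t, fun j => by rw [huniq p hp, hqdef]⟩
end
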